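/- The group presented by two generators a, b subject to the relations a² = 1, b³ = 1, (a·b)⁵ = 1 is isomorphic to the alternating group Alt_5; in particular it has order 60. -/

import Mathlib

set_option maxRecDepth 40000

/-- The relations `a² = 1`, `b³ = 1`, `(ab)⁵ = 1` of the (2,3,5) triangle group,
on the two generators `a = of true`, `b = of false` of the free group on `Bool`. -/
def rels235 : Set (FreeGroup Bool) :=
  {FreeGroup.of true ^ 2, FreeGroup.of false ^ 3,
    (FreeGroup.of true * FreeGroup.of false) ^ 5}

namespace VonDyck235

private def a : PresentedGroup rels235 := PresentedGroup.of true
private def b : PresentedGroup rels235 := PresentedGroup.of false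

private lemma rel_one {r : FreeGroup Bool} (h : r ∈ rels235) :
    PresentedGroup.mk rels235 r = 1 :=
  (QuotientGroup.eq_one_iff r).2 (Subgroup.subset_normalClosure h)

private lemma ha : a ^ 2 = 1 := by
  have : a ^ 2 = PresentedGroup.mk rels235 (FreeGroup.of true ^ 2) := by
    rw [map_pow]; rfl
  rw [this, rel_one (by simp [rels235])]

private lemma hb : b ^ 3 = 1 := by
  have : b ^ 3 = PresentedGroup.mk rels235 (FreeGroup.of false ^ 3) := by
    rw [map_pow]; rfl
  rw [this, rel_one (by simp [rels235])]

private lemma hc : (a * b) ^ 5 = 1 := by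
  have : (a * b) ^ 5
      = PresentedGroup.mk rels235 ((FreeGroup.of true * FreeGroup.of false) ^ 5) := by
    rw [map_pow, map_mul]; rfl
  rw [this, rel_one (by simp [rels235])]

private lemma ra : a * a = 1 := by rw [← ha, pow_two]
private lemma rb : b * b * b = 1 := by rw [← hb, pow_succ, pow_two]
private lemma rc : a * b * a * b * a * b * a * b * a * b = 1 := by
  rw [← hc, pow_succ, pow_succ, pow_succ, pow_succ, pow_one]
  group

/-- The twelve coset representatives of `⟨ab⟩` in the presented group. -/
private def W : Fin 12 → PresentedGroup rels235
  | 0 => 1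
  | 1 => a
  | 2 => b
  | 3 => b * a
  | 4 => b * a * b
  | 5 => b * a * b * a
  | 6 => b * a * b * b
  | 7 => b * a * b * a * b
  | 8 => b * a * b * a * b * b
  | 9 => b * a * b * a * b * b * a
  | 10 => b * a * b * a * b * b * a * b
  | 11 => b * a * b * a * b * b * a * b * a

private lemma e0a : W 0 * a = (a * b) ^ 0 * W 1 := by
  show 1 * a = (a * b) ^ 0 * (a)
  have hR : (a * b) ^ 0 * (a) = a := by
    simp only [pow_succ, pow_zero, pow_one, one_mul, mul_one]
    try group
  rw [hR]
  group

private lemma e0b : W 0 * b = (a * b) ^ 0 * W 2 := by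
  show 1 * b = (a * b) ^ 0 * (b)
  have hR : (a * b) ^ 0 * (b) = b := by
    simp only [pow_succ, pow_zero, pow_one, one_mul, mul_one]
    try group
  rw [hR]
  group

private lemma e1a : W 1 * a = (a * b) ^ 0 * W 0 := by
  show a * a = (a * b) ^ 0 * 1
  have hR : (a * b) ^ 0 * 1 = 1 := by
    simp only [pow_succ, pow_zero, pow_one, one_mul, mul_one]
    try group
  rw [hR]
  have h : a * a = (a * a) * ((1)) := by group
  rw [h]
  simp only [ra, rb, rc, inv_one, one_mul, mul_one]
  all_goals simp only [zpow_two, pow_two, zpow_one, zpow_zero, pow_succ, pow_one, pow_zero, one_mul, mul_one, mul_assoc]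

private lemma e1b : W 1 * b = (a * b) ^ 1 * W 0 := by
  show a * b = (a * b) ^ 1 * 1
  have hR : (a * b) ^ 1 * 1 = a * b := by
    simp only [pow_succ, pow_zero, pow_one, one_mul, mul_one]
    try group
  rw [hR]

private lemma e2a : W 2 * a = (a * b) ^ 0 * W 3 := by
  show b * a = (a * b) ^ 0 * (b * a)
  have hR : (a * b) ^ 0 * (b * a) = b * a := by
    simp only [pow_succ, pow_zero, pow_one, one_mul, mul_one]
    try group
  rw [hR]

private lemma e2b : W 2 * b = (a * b) ^ 4 * W 1 := by
  show b * b = (a * b) ^ 4 * (a)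
  have hR : (a * b) ^ 4 * (a) = a * b * a * b * a * b * a * b * a := by
    simp only [pow_succ, pow_zero, pow_one, one_mul, mul_one]
    try group
  rw [hR]
  have h : b * b = (b * b * a⁻¹) * (a * b * a * b * a * b * a * b * a * b)⁻¹ * (b * b * a⁻¹)⁻¹ * ((b * b * b) * ((a * b * a * b * a * b * a * b * a))) := by group
  rw [h]
  simp only [ra, rb, rc, inv_one, one_mul, mul_one]
  group
  all_goals simp only [zpow_two, pow_two, zpow_one, zpow_zero, pow_succ, pow_one, pow_zero, one_mul, mul_one, mul_assoc]

private lemma e3a : W 3 * a = (a * b) ^ 0 * W 2 := by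
  show b * a * a = (a * b) ^ 0 * (b)
  have hR : (a * b) ^ 0 * (b) = b := by
    simp only [pow_succ, pow_zero, pow_one, one_mul, mul_one]
    try group
  rw [hR]
  have h : b * a * a = (b) * (a * a) * (b)⁻¹ * ((b)) := by group
  rw [h]
  simp only [ra, rb, rc, inv_one, one_mul, mul_one]
  group
  all_goals simp only [zpow_two, pow_two, zpow_one, zpow_zero, pow_succ, pow_one, pow_zero, one_mul, mul_one, mul_assoc]

private lemma e3b : W 3 * b = (a * b) ^ 0 * W 4 := by
  show b * a * b = (a * b) ^ 0 * (b * a * b)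
  have hR : (a * b) ^ 0 * (b * a * b) = b * a * b := by
    simp only [pow_succ, pow_zero, pow_one, one_mul, mul_one]
    try group
  rw [hR]

private lemma e4a : W 4 * a = (a * b) ^ 0 * W 5 := by
  show b * a * b * a = (a * b) ^ 0 * (b * a * b * a)
  have hR : (a * b) ^ 0 * (b * a * b * a) = b * a * b * a := by
    simp only [pow_succ, pow_zero, pow_one, one_mul, mul_one]
    try group
  rw [hR]

private lemma e4b : W 4 * b = (a * b) ^ 0 * W 6 := by
  show b * a * b * b = (a * b) ^ 0 * (b * a * b * b)
  have hR : (a * b) ^ 0 * (b * a * b * b) = b * a * b * b := by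
    simp only [pow_succ, pow_zero, pow_one, one_mul, mul_one]
    try group
  rw [hR]

private lemma e5a : W 5 * a = (a * b) ^ 0 * W 4 := by
  show b * a * b * a * a = (a * b) ^ 0 * (b * a * b)
  have hR : (a * b) ^ 0 * (b * a * b) = b * a * b := by
    simp only [pow_succ, pow_zero, pow_one, one_mul, mul_one]
    try group
  rw [hR]
  have h : b * a * b * a * a = (b * a * b) * (a * a) * (b * a * b)⁻¹ * ((b * a * b)) := by group
  rw [h]
  simp only [ra, rb, rc, inv_one, one_mul, mul_one]
  group
  all_goals simp only [zpow_two, pow_two, zpow_one, zpow_zero, pow_succ, pow_one, pow_zero, one_mul, mul_one, mul_assoc]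

private lemma e5b : W 5 * b = (a * b) ^ 0 * W 7 := by
  show b * a * b * a * b = (a * b) ^ 0 * (b * a * b * a * b)
  have hR : (a * b) ^ 0 * (b * a * b * a * b) = b * a * b * a * b := by
    simp only [pow_succ, pow_zero, pow_one, one_mul, mul_one]
    try group
  rw [hR]

private lemma e6a : W 6 * a = (a * b) ^ 4 * W 7 := by
  show b * a * b * b * a = (a * b) ^ 4 * (b * a * b * a * b)
  have hR : (a * b) ^ 4 * (b * a * b * a * b) = a * b * a * b * a * b * a * b * b * a * b * a * b := by
    simp only [pow_succ, pow_zero, pow_one, one_mul, mul_one]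
    try group
  rw [hR]
  have h : b * a * b * b * a = (b * a * b * b * a * b⁻¹ * a⁻¹ * b⁻¹ * a⁻¹ * b⁻¹) * (a * b * a * b * a * b * a * b * a * b)⁻¹ * (b * a * b * b * a * b⁻¹ * a⁻¹ * b⁻¹ * a⁻¹ * b⁻¹)⁻¹ * ((b * a) * (b * b * b) * (b * a)⁻¹ * ((b * a * b⁻¹) * (a * a) * (b * a * b⁻¹)⁻¹ * ((b * a) * (a * b * a * b * a * b * a * b * a * b)⁻¹ * (b * a)⁻¹ * ((b) * (a * a) * (b)⁻¹ * ((b * b) * (a * a) * (b * b)⁻¹ * ((b * b * b) * ((a * b * a * b * a * b * a * b * b * a * b * a * b)))))))) := by group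
  rw [h]
  simp only [ra, rb, rc, inv_one, one_mul, mul_one]
  group
  all_goals simp only [zpow_two, pow_two, zpow_one, zpow_zero, pow_succ, pow_one, pow_zero, one_mul, mul_one, mul_assoc]

private lemma e6b : W 6 * b = (a * b) ^ 0 * W 3 := by
  show b * a * b * b * b = (a * b) ^ 0 * (b * a)
  have hR : (a * b) ^ 0 * (b * a) = b * a := by
    simp only [pow_succ, pow_zero, pow_one, one_mul, mul_one]
    try group
  rw [hR]
  have h : b * a * b * b * b = (b * a) * (b * b * b) * (b * a)⁻¹ * ((b * a)) := by group
  rw [h]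
  simp only [ra, rb, rc, inv_one, one_mul, mul_one]
  group
  all_goals simp only [zpow_two, pow_two, zpow_one, zpow_zero, pow_succ, pow_one, pow_zero, one_mul, mul_one, mul_assoc]

private lemma e7a : W 7 * a = (a * b) ^ 1 * W 6 := by
  show b * a * b * a * b * a = (a * b) ^ 1 * (b * a * b * b)
  have hR : (a * b) ^ 1 * (b * a * b * b) = a * b * b * a * b * b := by
    simp only [pow_succ, pow_zero, pow_one, one_mul, mul_one]
    try group
  rw [hR]
  have h : b * a * b * a * b * a = (b) * (a * b * a * b * a * b * a * b * a * b) * (b)⁻¹ * ((a⁻¹ * b⁻¹ * a⁻¹) * (b * b * b)⁻¹ * (a⁻¹ * b⁻¹ * a⁻¹)⁻¹ * ((a⁻¹ * b⁻¹) * (a * a)⁻¹ * (a⁻¹ * b⁻¹)⁻¹ * ((a⁻¹) * (b * b * b)⁻¹ * (a⁻¹)⁻¹ * ((a * a)⁻¹ * ((a * b * b * a * b * b)))))) := by group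
  rw [h]
  simp only [ra, rb, rc, inv_one, one_mul, mul_one]
  group
  all_goals simp only [zpow_two, pow_two, zpow_one, zpow_zero, pow_succ, pow_one, pow_zero, one_mul, mul_one, mul_assoc]

private lemma e7b : W 7 * b = (a * b) ^ 0 * W 8 := by
  show b * a * b * a * b * b = (a * b) ^ 0 * (b * a * b * a * b * b)
  have hR : (a * b) ^ 0 * (b * a * b * a * b * b) = b * a * b * a * b * b := by
    simp only [pow_succ, pow_zero, pow_one, one_mul, mul_one]
    try group
  rw [hR]

private lemma e8a : W 8 * a = (a * b) ^ 0 * W 9 := by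
  show b * a * b * a * b * b * a = (a * b) ^ 0 * (b * a * b * a * b * b * a)
  have hR : (a * b) ^ 0 * (b * a * b * a * b * b * a) = b * a * b * a * b * b * a := by
    simp only [pow_succ, pow_zero, pow_one, one_mul, mul_one]
    try group
  rw [hR]

private lemma e8b : W 8 * b = (a * b) ^ 0 * W 5 := by
  show b * a * b * a * b * b * b = (a * b) ^ 0 * (b * a * b * a)
  have hR : (a * b) ^ 0 * (b * a * b * a) = b * a * b * a := by
    simp only [pow_succ, pow_zero, pow_one, one_mul, mul_one]
    try group
  rw [hR]
  have h : b * a * b * a * b * b * b = (b * a * b * a) * (b * b * b) * (b * a * b * a)⁻¹ * ((b * a * b * a)) := by group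
  rw [h]
  simp only [ra, rb, rc, inv_one, one_mul, mul_one]
  group
  all_goals simp only [zpow_two, pow_two, zpow_one, zpow_zero, pow_succ, pow_one, pow_zero, one_mul, mul_one, mul_assoc]

private lemma e9a : W 9 * a = (a * b) ^ 0 * W 8 := by
  show b * a * b * a * b * b * a * a = (a * b) ^ 0 * (b * a * b * a * b * b)
  have hR : (a * b) ^ 0 * (b * a * b * a * b * b) = b * a * b * a * b * b := by
    simp only [pow_succ, pow_zero, pow_one, one_mul, mul_one]
    try group
  rw [hR]
  have h : b * a * b * a * b * b * a * a = (b * a * b * a * b * b) * (a * a) * (b * a * b * a * b * b)⁻¹ * ((b * a * b * a * b * b)) := by group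
  rw [h]
  simp only [ra, rb, rc, inv_one, one_mul, mul_one]
  group
  all_goals simp only [zpow_two, pow_two, zpow_one, zpow_zero, pow_succ, pow_one, pow_zero, one_mul, mul_one, mul_assoc]

private lemma e9b : W 9 * b = (a * b) ^ 0 * W 10 := by
  show b * a * b * a * b * b * a * b = (a * b) ^ 0 * (b * a * b * a * b * b * a * b)
  have hR : (a * b) ^ 0 * (b * a * b * a * b * b * a * b) = b * a * b * a * b * b * a * b := by
    simp only [pow_succ, pow_zero, pow_one, one_mul, mul_one]
    try group
  rw [hR]

private lemma e10a : W 10 * a = (a * b) ^ 0 * W 11 := by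
  show b * a * b * a * b * b * a * b * a = (a * b) ^ 0 * (b * a * b * a * b * b * a * b * a)
  have hR : (a * b) ^ 0 * (b * a * b * a * b * b * a * b * a) = b * a * b * a * b * b * a * b * a := by
    simp only [pow_succ, pow_zero, pow_one, one_mul, mul_one]
    try group
  rw [hR]

private lemma e10b : W 10 * b = (a * b) ^ 4 * W 11 := by
  show b * a * b * a * b * b * a * b * b = (a * b) ^ 4 * (b * a * b * a * b * b * a * b * a)
  have hR : (a * b) ^ 4 * (b * a * b * a * b * b * a * b * a) = a * b * a * b * a * b * a * b * b * a * b * a * b * b * a * b * a := by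
    simp only [pow_succ, pow_zero, pow_one, one_mul, mul_one]
    try group
  rw [hR]
  have h : b * a * b * a * b * b * a * b * b = (b * a * b * a * b * b * a * b * b * a⁻¹ * b⁻¹ * a⁻¹ * b⁻¹ * b⁻¹ * a⁻¹ * b⁻¹ * a⁻¹ * b⁻¹) * (a * b * a * b * a * b * a * b * a * b)⁻¹ * (b * a * b * a * b * b * a * b * b * a⁻¹ * b⁻¹ * a⁻¹ * b⁻¹ * b⁻¹ * a⁻¹ * b⁻¹ * a⁻¹ * b⁻¹)⁻¹ * ((b * a * b * a) * (b * b * b) * (b * a * b * a)⁻¹ * ((b * a * b * a * b⁻¹ * a) * (b * b * b) * (b * a * b * a * b⁻¹ * a)⁻¹ * ((b * a * b * a * b⁻¹ * a * b⁻¹ * a⁻¹ * b⁻¹ * a⁻¹) * (b * b * b)⁻¹ * (b * a * b * a * b⁻¹ * a * b⁻¹ * a⁻¹ * b⁻¹ * a⁻¹)⁻¹ * ((b * a * b * a * b⁻¹) * (a * a) * (b * a * b * a * b⁻¹)⁻¹ * ((b * a * b * a) * (a * b * a * b * a * b * a * b * a * b)⁻¹ * (b * a * b * a)⁻¹ * ((b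 * a * b) * (a * a) * (b * a * b)⁻¹ * ((b * a) * (b * b * b) * (b * a)⁻¹ * ((b * a * b⁻¹ * a) * (b * b * b) * (b * a * b⁻¹ * a)⁻¹ * ((b * a * b⁻¹) * (a * a) * (b * a * b⁻¹)⁻¹ * ((b * a) * (a * b * a * b * a * b * a * b * a * b)⁻¹ * (b * a)⁻¹ * ((b) * (a * a) * (b)⁻¹ * ((b * b) * (a * a) * (b * b)⁻¹ * ((b * b * b) * ((a * b * a * b * a * b * a * b * b * a * b * a * b * b * a * b * a))))))))))))))) := by group
  rw [h]
  simp only [ra, rb, rc, inv_one, one_mul, mul_one]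
  group
  all_goals simp only [zpow_two, pow_two, zpow_one, zpow_zero, pow_succ, pow_one, pow_zero, one_mul, mul_one, mul_assoc]

private lemma e11a : W 11 * a = (a * b) ^ 0 * W 10 := by
  show b * a * b * a * b * b * a * b * a * a = (a * b) ^ 0 * (b * a * b * a * b * b * a * b)
  have hR : (a * b) ^ 0 * (b * a * b * a * b * b * a * b) = b * a * b * a * b * b * a * b := by
    simp only [pow_succ, pow_zero, pow_one, one_mul, mul_one]
    try group
  rw [hR]
  have h : b * a * b * a * b * b * a * b * a * a = (b * a * b * a * b * b * a * b) * (a * a) * (b * a * b * a * b * b * a * b)⁻¹ * ((b * a * b * a * b * b * a * b)) := by group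
  rw [h]
  simp only [ra, rb, rc, inv_one, one_mul, mul_one]
  group
  all_goals simp only [zpow_two, pow_two, zpow_one, zpow_zero, pow_succ, pow_one, pow_zero, one_mul, mul_one, mul_assoc]

private lemma e11b : W 11 * b = (a * b) ^ 1 * W 9 := by
  show b * a * b * a * b * b * a * b * a * b = (a * b) ^ 1 * (b * a * b * a * b * b * a)
  have hR : (a * b) ^ 1 * (b * a * b * a * b * b * a) = a * b * b * a * b * a * b * b * a := by
    simp only [pow_succ, pow_zero, pow_one, one_mul, mul_one]
    try group
  rw [hR]
  have h : b * a * b * a * b * b * a * b * a * b = (b * a * b * a) * (b * b * b) * (b * a * b * a)⁻¹ * ((b * a * b * a * b⁻¹ * a * b * a * b * a⁻¹) * (b * b * b)⁻¹ * (b * a * b * a * b⁻¹ * a * b * a * b * a⁻¹)⁻¹ * ((b * a * b * a * b⁻¹ * a * b * a * b * a⁻¹ * b * a⁻¹ * b⁻¹ * a⁻¹) * (b * b * b)⁻¹ * (b * a * b * a * b⁻¹ * a * b * a * b * a⁻¹ * b * a⁻¹ * b⁻¹ * a⁻¹)⁻¹ * ((b * a * b * a * b⁻¹ * a * b * a * b)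 * (a * a)⁻¹ * (b * a * b * a * b⁻¹ * a * b * a * b)⁻¹ * ((b * a * b * a * b⁻¹) * (a * b * a * b * a * b * a * b * a * b) * (b * a * b * a * b⁻¹)⁻¹ * ((b * a * b * a * b⁻¹ * b⁻¹ * a⁻¹ * b⁻¹) * (a * a)⁻¹ * (b * a * b * a * b⁻¹ * b⁻¹ * a⁻¹ * b⁻¹)⁻¹ * ((b * a * b * a) * (b * b * b)⁻¹ * (b * a * b * a)⁻¹ * ((b * a * b * a * b * a⁻¹) * (b * b * b)⁻¹ * (b * a * b * a * b * a⁻¹)⁻¹ * ((b * a * b * a * b) * (a * a)⁻¹ * (b * a * b * a * b)⁻¹ * ((b) * (a * b * a * b * a * b * a * b * a * b) * (b)⁻¹ * ((a⁻¹ * b⁻¹) * (a * a)⁻¹ * (a⁻¹ * b⁻¹)⁻¹ * ((a * a)⁻¹ * ((a * b * b * a * b * a * b * b * a))))))))))))) := by group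
  rw [h]
  simp only [ra, rb, rc, inv_one, one_mul, mul_one]
  group
  all_goals simp only [zpow_two, pow_two, zpow_one, zpow_zero, pow_succ, pow_one, pow_zero, one_mul, mul_one, mul_assoc]
private lemma stepA : ∀ i : Fin 12, ∃ (m : ℕ) (j : Fin 12),
    W i * a = (a * b) ^ m * W j := by
  intro i
  fin_cases i
  · exact ⟨0, 1, e0a⟩
  · exact ⟨0, 0, e1a⟩
  · exact ⟨0, 3, e2a⟩
  · exact ⟨0, 2, e3a⟩
  · exact ⟨0, 5, e4a⟩
  · exact ⟨0, 4, e5a⟩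
  · exact ⟨4, 7, e6a⟩
  · exact ⟨1, 6, e7a⟩
  · exact ⟨0, 9, e8a⟩
  · exact ⟨0, 8, e9a⟩
  · exact ⟨0, 11, e10a⟩
  · exact ⟨0, 10, e11a⟩

private lemma stepB : ∀ i : Fin 12, ∃ (m : ℕ) (j : Fin 12),
    W i * b = (a * b) ^ m * W j := by
  intro i
  fin_cases i
  · exact ⟨0, 2, e0b⟩
  · exact ⟨1, 0, e1b⟩
  · exact ⟨4, 1, e2b⟩
  · exact ⟨0, 4, e3b⟩
  · exact ⟨0, 6, e4b⟩
  · exact ⟨0, 7, e5b⟩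
  · exact ⟨0, 3, e6b⟩
  · exact ⟨0, 8, e7b⟩
  · exact ⟨0, 5, e8b⟩
  · exact ⟨0, 10, e9b⟩
  · exact ⟨4, 11, e10b⟩
  · exact ⟨1, 9, e11b⟩

/-- Normal-form predicate: `g = (ab)^k * w_i`. -/
private def Q (g : PresentedGroup rels235) : Prop :=
  ∃ (k : Fin 5) (i : Fin 12), g = (a * b) ^ (k : ℕ) * W i

private lemma cmod (n : ℕ) : (a * b) ^ (n % 5) = (a * b) ^ n := by
  conv_rhs => rw [← Nat.div_add_mod n 5]
  rw [pow_add, pow_mul, hc, one_pow, one_mul]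

private lemma Qstep {g : PresentedGroup rels235} (hg : Q g) {x : PresentedGroup rels235}
    (hx : ∀ i : Fin 12, ∃ (m : ℕ) (j : Fin 12), W i * x = (a * b) ^ m * W j) :
    Q (g * x) := by
  obtain ⟨k, i, rfl⟩ := hg
  obtain ⟨m, j, hij⟩ := hx i
  refine ⟨⟨((k : ℕ) + m) % 5, Nat.mod_lt _ (by norm_num)⟩, j, ?_⟩
  rw [mul_assoc, hij, ← mul_assoc, ← pow_add]
  show (a * b) ^ ((k : ℕ) + m) * W j = (a * b) ^ (((k : ℕ) + m) % 5) * W j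
  rw [cmod]

private lemma Qa {g : PresentedGroup rels235} (hg : Q g) : Q (g * a) := Qstep hg stepA

private lemma Qb {g : PresentedGroup rels235} (hg : Q g) : Q (g * b) := Qstep hg stepB

private lemma inv_a : a⁻¹ = a := inv_eq_of_mul_eq_one_left ra

private lemma inv_b : b⁻¹ = b * b := inv_eq_of_mul_eq_one_left rb

private lemma key (z : FreeGroup Bool) :
    ∀ g : PresentedGroup rels235, Q g → Q (g * PresentedGroup.mk rels235 z) := by
  induction z using FreeGroup.induction_on with
  | C1 => intro g hg; simpa using hg
  | of x =>
    intro g hg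
    cases x
    · exact Qb hg
    · exact Qa hg
  | inv_of x _ =>
    intro g hg
    cases x
    · have : PresentedGroup.mk rels235 ((FreeGroup.of false : FreeGroup Bool)⁻¹) = b⁻¹ := by
        rw [map_inv]; rfl
      rw [this, inv_b, ← mul_assoc]
      exact Qb (Qb hg)
    · have : PresentedGroup.mk rels235 ((FreeGroup.of true : FreeGroup Bool)⁻¹) = a⁻¹ := by
        rw [map_inv]; rfl
      rw [this, inv_a]
      exact Qa hg
  | mul x y ihx ihy =>
    intro g hg
    rw [map_mul, ← mul_assoc]
    exact ihy _ (ihx _ hg)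

private lemma Qall (g : PresentedGroup rels235) : Q g := by
  obtain ⟨z, rfl⟩ := PresentedGroup.mk_surjective rels235 g
  have base : Q 1 := ⟨0, 0, by simp [W]⟩
  simpa using key z 1 base

private def Lmap : Fin 5 × Fin 12 → PresentedGroup rels235 :=
  fun p => (a * b) ^ (p.1 : ℕ) * W p.2

private lemma Lsurj : Function.Surjective Lmap := by
  intro g
  obtain ⟨k, i, h⟩ := Qall g
  exact ⟨(k, i), h.symm⟩

/- The `A₅` side. -/

private def s : Equiv.Perm (Fin 5) := Equiv.swap 0 1 * Equiv.swap 2 3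
private def t : Equiv.Perm (Fin 5) := Equiv.swap 0 2 * Equiv.swap 2 4

private def σ : alternatingGroup (Fin 5) :=
  ⟨s, by rw [Equiv.Perm.mem_alternatingGroup]; decide⟩
private def τ : alternatingGroup (Fin 5) :=
  ⟨t, by rw [Equiv.Perm.mem_alternatingGroup]; decide⟩

private def fgen : Bool → alternatingGroup (Fin 5) := fun x => if x then σ else τ

private lemma hrels : ∀ r ∈ rels235, FreeGroup.lift fgen r = 1 := by
  intro r hr
  simp only [rels235, Set.mem_insert_iff, Set.mem_singleton_iff] at hr
  rcases hr with rfl | rfl | rfl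
  · rw [map_pow, FreeGroup.lift_apply_of]
    show σ ^ 2 = 1
    decide
  · rw [map_pow, FreeGroup.lift_apply_of]
    show τ ^ 3 = 1
    decide
  · rw [map_pow, map_mul, FreeGroup.lift_apply_of, FreeGroup.lift_apply_of]
    show (σ * τ) ^ 5 = 1
    decide

private def φ : PresentedGroup rels235 →* alternatingGroup (Fin 5) :=
  PresentedGroup.toGroup hrels

private lemma φa : φ a = σ := PresentedGroup.toGroup.of hrels

private lemma φb : φ b = τ := PresentedGroup.toGroup.of hrels

private def WM : Fin 12 → alternatingGroup (Fin 5)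
  | 0 => 1
  | 1 => σ
  | 2 => τ
  | 3 => τ * σ
  | 4 => τ * σ * τ
  | 5 => τ * σ * τ * σ
  | 6 => τ * σ * τ * τ
  | 7 => τ * σ * τ * σ * τ
  | 8 => τ * σ * τ * σ * τ * τ
  | 9 => τ * σ * τ * σ * τ * τ * σ
  | 10 => τ * σ * τ * σ * τ * τ * σ * τ
  | 11 => τ * σ * τ * σ * τ * τ * σ * τ * σ

private def M : Fin 5 × Fin 12 → alternatingGroup (Fin 5) :=
  fun p => (σ * τ) ^ (p.1 : ℕ) * WM p.2

private lemma φW : ∀ i : Fin 12, φ (W i) = WM i := by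
  intro i
  fin_cases i <;> simp [W, WM, map_mul, map_one, φa, φb]

private lemma φL : ∀ p, φ (Lmap p) = M p := by
  intro p
  simp only [Lmap, M, map_mul, map_pow, φa, φb, φW]

private lemma injM : Function.Injective M := by decide

private lemma injφ : Function.Injective φ := by
  intro g1 g2 h
  obtain ⟨p1, rfl⟩ := Lsurj g1
  obtain ⟨p2, rfl⟩ := Lsurj g2
  rw [φL, φL] at h
  rw [injM h]

private lemma injL : Function.Injective Lmap := by
  intro p1 p2 h
  apply injM
  rw [← φL, ← φL, h]

private lemma cardG : Nat.card (PresentedGroup rels235) = 60 := by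
  have hb : Function.Bijective Lmap := ⟨injL, Lsurj⟩
  have := Nat.card_eq_of_bijective Lmap hb
  simp only [Nat.card_eq_fintype_card, Fintype.card_prod, Fintype.card_fin] at this
  omega

private lemma cardA5 : Nat.card (alternatingGroup (Fin 5)) = 60 := by
  have h : 2 * Fintype.card (alternatingGroup (Fin 5)) = 120 := by
    rw [two_mul_card_alternatingGroup, Fintype.card_perm, Fintype.card_fin]; rfl
  rw [Nat.card_eq_fintype_card]
  omega

private lemma bijφ : Function.Bijective φ := by
  rw [Nat.bijective_iff_injective_and_card]
  exact ⟨injφ, by rw [cardG, cardA5]⟩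

end VonDyck235

/-- The group presented by `⟨a, b ∣ a² = b³ = (ab)⁵ = 1⟩` is isomorphic to the
alternating group `Alt₅`; in particular it has order `60`. -/
theorem presentedGroup_235_iso_alternatingGroup :
    Nonempty (PresentedGroup rels235 ≃* alternatingGroup (Fin 5)) ∧
    Nat.card (PresentedGroup rels235) = 60 := by
  exact ⟨⟨MulEquiv.ofBijective VonDyck235.φ VonDyck235.bijφ⟩, VonDyck235.cardG⟩
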